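/- The Banach space ℓ∞ (equivalently, the dual of ℓ₁) does not embed linearly isometrically into L₁(μ) for any measure μ. In particular, ℓ∞ does not embed linearly isometrically into the dual of C([0,1]). -/

import Mathlib

open MeasureTheory NormedSpace

lemma hlawka_real (a b c : ℝ) : |a+b| + |b+c| + |c+a| ≤ |a+b+c| + |a| + |b| + |c| := by
  rcases abs_cases (a+b) with ⟨h1,_⟩|⟨h1,_⟩ <;>
  rcases abs_cases (b+c) with ⟨h2,_⟩|⟨h2,_⟩ <;>
  rcases abs_cases (c+a) with ⟨h3,_⟩|⟨h3,_⟩ <;>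
  rcases abs_cases (a+b+c) with ⟨h4,_⟩|⟨h4,_⟩ <;>
  rcases abs_cases a with ⟨h5,_⟩|⟨h5,_⟩ <;>
  rcases abs_cases b with ⟨h6,_⟩|⟨h6,_⟩ <;>
  rcases abs_cases c with ⟨h7,_⟩|⟨h7,_⟩ <;> linarith

lemma hlawka_L1 {α : Type} [MeasurableSpace α] (μ : Measure α) (f g h : Lp ℝ 1 μ) :
    ‖f + g‖ + ‖g + h‖ + ‖h + f‖ ≤ ‖f + g + h‖ + ‖f‖ + ‖g‖ + ‖h‖ := by
  have hif : Integrable f μ := L1.integrable_coeFn f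
  have hig : Integrable g μ := L1.integrable_coeFn g
  have hih : Integrable h μ := L1.integrable_coeFn h
  have key : ∀ (u : Lp ℝ 1 μ) (v : α → ℝ), (⇑u =ᵐ[μ] v) → ‖u‖ = ∫ a, |v a| ∂μ := by
    intro u v huv
    rw [L1.norm_eq_integral_norm]
    exact integral_congr_ae (huv.mono fun a ha => by simp only [Real.norm_eq_abs, ha])
  have h1 : ‖f + g‖ = ∫ a, |f a + g a| ∂μ := key _ _ (Lp.coeFn_add f g)
  have h2 : ‖g + h‖ = ∫ a, |g a + h a| ∂μ := key _ _ (Lp.coeFn_add g h)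
  have h3 : ‖h + f‖ = ∫ a, |h a + f a| ∂μ := key _ _ (Lp.coeFn_add h f)
  have h4 : ‖f + g + h‖ = ∫ a, |f a + g a + h a| ∂μ := by
    refine key _ _ ?_
    filter_upwards [Lp.coeFn_add (f + g) h, Lp.coeFn_add f g] with a ha hb
    simp only [ha, Pi.add_apply, hb]
  have h5 : ‖f‖ = ∫ a, |f a| ∂μ := key _ _ (Filter.EventuallyEq.refl _ _)
  have h6 : ‖g‖ = ∫ a, |g a| ∂μ := key _ _ (Filter.EventuallyEq.refl _ _)
  have h7 : ‖h‖ = ∫ a, |h a| ∂μ := key _ _ (Filter.EventuallyEq.refl _ _)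
  rw [h1, h2, h3, h4, h5, h6, h7]
  have i1 : Integrable (fun a => |f a + g a|) μ := (hif.add hig).abs
  have i2 : Integrable (fun a => |g a + h a|) μ := (hig.add hih).abs
  have i3 : Integrable (fun a => |h a + f a|) μ := (hih.add hif).abs
  have i4 : Integrable (fun a => |f a + g a + h a|) μ := ((hif.add hig).add hih).abs
  have i5 := hif.abs; have i6 := hig.abs; have i7 := hih.abs
  have A : ∫ a, (|f a + g a| + |g a + h a| + |h a + f a|) ∂μ
      = (∫ a, |f a + g a| ∂μ) + (∫ a, |g a + h a| ∂μ) + ∫ a, |h a + f a| ∂μ := by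
    have i12 : Integrable (fun a => |f a + g a| + |g a + h a|) μ := i1.add i2
    rw [integral_add i12 i3, integral_add i1 i2]
  have B : ∫ a, (|f a + g a + h a| + |f a| + |g a| + |h a|) ∂μ
      = (∫ a, |f a + g a + h a| ∂μ) + (∫ a, |f a| ∂μ) + (∫ a, |g a| ∂μ) + ∫ a, |h a| ∂μ := by
    have i45 : Integrable (fun a => |f a + g a + h a| + |f a|) μ := i4.add i5
    have i456 : Integrable (fun a => |f a + g a + h a| + |f a| + |g a|) μ := i45.add i6
    rw [integral_add i456 i7, integral_add i45 i6, integral_add i4 i5]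
  rw [← A, ← B]
  refine integral_mono ((i1.add i2).add i3) (((i4.add i5).add i6).add i7) fun a => ?_
  have := hlawka_real (f a) (g a) (h a)
  simp only [Pi.add_apply]
  linarith [this, abs_add_le (h a) (f a)]

lemma clamp_facts (a b c : ℝ) (ha : |a| ≤ 1) (hb : |b| ≤ 1) (hc : |c| ≤ 1) :
    |max (-1) (max (a+b) (max (b+c) (a+c)) - 1)| ≤ 1 ∧
    |a + b - max (-1) (max (a+b) (max (b+c) (a+c)) - 1)| ≤ 1 ∧
    |b + c - max (-1) (max (a+b) (max (b+c) (a+c)) - 1)| ≤ 1 ∧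
    |a + c - max (-1) (max (a+b) (max (b+c) (a+c)) - 1)| ≤ 1 := by
  have ha' := abs_le.1 ha
  have hb' := abs_le.1 hb
  have hc' := abs_le.1 hc
  rcases max_cases (b+c) (a+c) with ⟨h1,h1'⟩|⟨h1,h1'⟩ <;>
  rcases max_cases (a+b) (max (b+c) (a+c)) with ⟨h2,h2'⟩|⟨h2,h2'⟩ <;>
  rcases max_cases (-1 : ℝ) (max (a+b) (max (b+c) (a+c)) - 1) with ⟨h3,h3'⟩|⟨h3,h3'⟩ <;>
  refine ⟨abs_le.2 ⟨?_,?_⟩, abs_le.2 ⟨?_,?_⟩, abs_le.2 ⟨?_,?_⟩, abs_le.2 ⟨?_,?_⟩⟩ <;>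
  rw [h3] <;> linarith

lemma hlawka_dual {K : Type*} [TopologicalSpace K] [CompactSpace K]
    (φ ψ χ : StrongDual ℝ C(K, ℝ)) :
    ‖φ + ψ‖ + ‖ψ + χ‖ + ‖χ + φ‖ ≤ ‖φ + ψ + χ‖ + ‖φ‖ + ‖ψ‖ + ‖χ‖ := by
  refine le_of_forall_pos_le_add fun ε hε => ?_
  have sel : ∀ ξ : StrongDual ℝ C(K,ℝ), ∃ v : C(K,ℝ), ‖v‖ ≤ 1 ∧ ‖ξ‖ - ε/3 < ξ v := by
    intro ξ
    rcases lt_or_ge (‖ξ‖ - ε/3) 0 with h0|h0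
    · exact ⟨0, by simp, by simpa using h0⟩
    · obtain ⟨w, hw1, hw2⟩ := ξ.exists_lt_apply_of_lt_opNorm
        (show ‖ξ‖ - ε/3 < ‖ξ‖ by linarith)
      rcases le_or_gt 0 (ξ w) with hs|hs
      · exact ⟨w, hw1.le, by rwa [Real.norm_eq_abs, abs_of_nonneg hs] at hw2⟩
      · refine ⟨-w, by simpa using hw1.le, ?_⟩
        rw [map_neg]
        rwa [Real.norm_eq_abs, abs_of_neg hs] at hw2
  obtain ⟨f, hf, hf2⟩ := sel (φ + ψ)
  obtain ⟨g, hg, hg2⟩ := sel (ψ + χ)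
  obtain ⟨h, hh, hh2⟩ := sel (χ + φ)
  set u : C(K,ℝ) := (-1) ⊔ ((f+g) ⊔ ((g+h) ⊔ (f+h)) - 1) with hu_def
  have hpt : ∀ x : K, u x = max (-1) (max (f x + g x) (max (g x + h x) (f x + h x)) - 1) := by
    intro x
    simp [hu_def, ContinuousMap.sup_apply]
  have habs : ∀ (v : C(K,ℝ)), ‖v‖ ≤ 1 → ∀ x : K, |v x| ≤ 1 := fun v hv x =>
    le_trans (ContinuousMap.norm_coe_le_norm v x) hv
  have key : ∀ x : K, |u x| ≤ 1 ∧ |f x + g x - u x| ≤ 1 ∧ |g x + h x - u x| ≤ 1 ∧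
      |f x + h x - u x| ≤ 1 := by
    intro x
    rw [hpt x]
    exact clamp_facts (f x) (g x) (h x) (habs f hf x) (habs g hg x) (habs h hh x)
  have hu : ‖u‖ ≤ 1 := (ContinuousMap.norm_le _ zero_le_one).2 fun x => (key x).1
  have hfg : ‖f + g - u‖ ≤ 1 := (ContinuousMap.norm_le _ zero_le_one).2 fun x => by
    simpa using (key x).2.1
  have hgh : ‖g + h - u‖ ≤ 1 := (ContinuousMap.norm_le _ zero_le_one).2 fun x => by
    simpa using (key x).2.2.1
  have hfh : ‖f + h - u‖ ≤ 1 := (ContinuousMap.norm_le _ zero_le_one).2 fun x => by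
    simpa using (key x).2.2.2
  have bound : ∀ (ξ : StrongDual ℝ C(K,ℝ)) (v : C(K,ℝ)), ‖v‖ ≤ 1 → ξ v ≤ ‖ξ‖ := by
    intro ξ v hv
    have h1 : ξ v ≤ ‖ξ v‖ := le_trans (le_abs_self _) (le_of_eq (Real.norm_eq_abs _).symm)
    have h2 := ξ.le_opNorm v
    nlinarith [norm_nonneg ξ]
  have eq1 : (φ + ψ) f + (ψ + χ) g + (χ + φ) h
      = (φ + ψ + χ) u + φ (f + h - u) + ψ (f + g - u) + χ (g + h - u) := by
    simp only [ContinuousLinearMap.add_apply, map_sub, map_add]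
    ring
  have b1 := bound (φ + ψ + χ) u hu
  have b2 := bound φ _ hfh
  have b3 := bound ψ _ hfg
  have b4 := bound χ _ hgh
  linarith [hf2, hg2, hh2]

lemma no_embed {Y : Type*} [NormedAddCommGroup Y] [NormedSpace ℝ Y]
    (hH : ∀ a b c : Y, ‖a+b‖ + ‖b+c‖ + ‖c+a‖ ≤ ‖a+b+c‖ + ‖a‖ + ‖b‖ + ‖c‖) :
    ¬ ∃ T : lp (fun _ : ℕ => ℝ) ⊤ →ₗ[ℝ] Y, ∀ f, ‖T f‖ = ‖f‖ := by
  rintro ⟨T, hT⟩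
  set e : ℕ → lp (fun _ : ℕ => ℝ) ⊤ := fun i => lp.single ⊤ i (1:ℝ) with he_def
  have he : ∀ i j : ℕ, (e i : ℕ → ℝ) j = if j = i then 1 else 0 := by
    intro i j
    by_cases hj : j = i
    · subst hj; simp [he_def, lp.single_apply_self]
    · simp [he_def, lp.single_apply_ne _ _ _ hj, hj]
  set x := e 0 + e 1 - e 2 with hx_def
  set y := e 0 - e 1 + e 2 with hy_def
  set z := -e 0 + e 1 + e 2 with hz_def
  have cx : ∀ j, (x : ℕ → ℝ) j = (e 0 : ℕ → ℝ) j + (e 1 : ℕ → ℝ) j - (e 2 : ℕ → ℝ) j := by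
    intro j; simp [hx_def, lp.coeFn_sub, lp.coeFn_add]
  have cy : ∀ j, (y : ℕ → ℝ) j = (e 0 : ℕ → ℝ) j - (e 1 : ℕ → ℝ) j + (e 2 : ℕ → ℝ) j := by
    intro j; simp [hy_def, lp.coeFn_sub, lp.coeFn_add]
  have cz : ∀ j, (z : ℕ → ℝ) j = -(e 0 : ℕ → ℝ) j + (e 1 : ℕ → ℝ) j + (e 2 : ℕ → ℝ) j := by
    intro j; simp [hz_def, lp.coeFn_neg, lp.coeFn_add]
  have norm_eq : ∀ (v : lp (fun _ : ℕ => ℝ) ⊤) (C : ℝ) (i : ℕ), 0 ≤ C →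
      (∀ j, ‖(v : ℕ → ℝ) j‖ ≤ C) → ‖(v : ℕ → ℝ) i‖ = C → ‖v‖ = C := by
    intro v C i h0 hb hi
    exact le_antisymm (lp.norm_le_of_forall_le h0 hb)
      (hi ▸ lp.norm_apply_le_norm ENNReal.top_ne_zero v i)
  have hx : ‖x‖ = 1 := by
    refine norm_eq x 1 0 zero_le_one (fun j => ?_) ?_
    · rw [cx]; simp only [he]; rcases j with _|_|_|j <;> split_ifs <;>
        first | contradiction | omega | norm_num
    · rw [cx]; simp only [he]; split_ifs <;> first | contradiction | omega | norm_num
  have hy : ‖y‖ = 1 := by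
    refine norm_eq y 1 0 zero_le_one (fun j => ?_) ?_
    · rw [cy]; simp only [he]; rcases j with _|_|_|j <;> split_ifs <;> first | contradiction | omega | norm_num
    · rw [cy]; simp only [he]; split_ifs <;> first | contradiction | omega | norm_num
  have hz : ‖z‖ = 1 := by
    refine norm_eq z 1 1 zero_le_one (fun j => ?_) ?_
    · rw [cz]; simp only [he]; rcases j with _|_|_|j <;> split_ifs <;> first | contradiction | omega | norm_num
    · rw [cz]; simp only [he]; split_ifs <;> first | contradiction | omega | norm_num
  have cxy : ∀ j, ((x + y : lp (fun _ : ℕ => ℝ) ⊤) : ℕ → ℝ) j = (x : ℕ → ℝ) j + (y : ℕ → ℝ) j :=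
    fun j => by simp [lp.coeFn_add]
  have cyz : ∀ j, ((y + z : lp (fun _ : ℕ => ℝ) ⊤) : ℕ → ℝ) j = (y : ℕ → ℝ) j + (z : ℕ → ℝ) j :=
    fun j => by simp [lp.coeFn_add]
  have czx : ∀ j, ((z + x : lp (fun _ : ℕ => ℝ) ⊤) : ℕ → ℝ) j = (z : ℕ → ℝ) j + (x : ℕ → ℝ) j :=
    fun j => by simp [lp.coeFn_add]
  have cxyz : ∀ j, ((x + y + z : lp (fun _ : ℕ => ℝ) ⊤) : ℕ → ℝ) j
      = (x : ℕ → ℝ) j + (y : ℕ → ℝ) j + (z : ℕ → ℝ) j := fun j => by simp [lp.coeFn_add]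
  have hxy : ‖x + y‖ = 2 := by
    refine norm_eq _ 2 0 (by norm_num) (fun j => ?_) ?_
    · rw [cxy, cx, cy]; simp only [he]; rcases j with _|_|_|j <;> split_ifs <;> first | contradiction | omega | norm_num
    · rw [cxy, cx, cy]; simp only [he]; split_ifs <;> first | contradiction | omega | norm_num
  have hyz : ‖y + z‖ = 2 := by
    refine norm_eq _ 2 2 (by norm_num) (fun j => ?_) ?_
    · rw [cyz, cy, cz]; simp only [he]; rcases j with _|_|_|j <;> split_ifs <;> first | contradiction | omega | norm_num
    · rw [cyz, cy, cz]; simp only [he]; split_ifs <;> first | contradiction | omega | norm_num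
  have hzx : ‖z + x‖ = 2 := by
    refine norm_eq _ 2 1 (by norm_num) (fun j => ?_) ?_
    · rw [czx, cz, cx]; simp only [he]; rcases j with _|_|_|j <;> split_ifs <;> first | contradiction | omega | norm_num
    · rw [czx, cz, cx]; simp only [he]; split_ifs <;> first | contradiction | omega | norm_num
  have hxyz : ‖x + y + z‖ = 1 := by
    refine norm_eq _ 1 0 zero_le_one (fun j => ?_) ?_
    · rw [cxyz, cx, cy, cz]; simp only [he]; rcases j with _|_|_|j <;> split_ifs <;> first | contradiction | omega | norm_num
    · rw [cxyz, cx, cy, cz]; simp only [he]; split_ifs <;> first | contradiction | omega | norm_num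
  have := hH (T x) (T y) (T z)
  simp only [← map_add, hT, hx, hy, hz, hxy, hyz, hzx, hxyz] at this
  linarith

theorem stmt_14 :
    (∀ (α : Type) [MeasurableSpace α] (μ : Measure α),
      ¬ ∃ T : lp (fun _ : ℕ => ℝ) ⊤ →ₗ[ℝ] Lp ℝ 1 μ, ∀ f, ‖T f‖ = ‖f‖) ∧
    ¬ ∃ T : lp (fun _ : ℕ => ℝ) ⊤ →ₗ[ℝ] StrongDual ℝ C(Set.Icc (0:ℝ) 1, ℝ),
        ∀ f, ‖T f‖ = ‖f‖ := by
  constructor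
  · intro α _ μ
    exact no_embed fun a b c => hlawka_L1 μ a b c
  · exact no_embed (Y := StrongDual ℝ C(Set.Icc (0:ℝ) 1, ℝ))
      fun a b c => hlawka_dual (K := Set.Icc (0:ℝ) 1) a b c
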